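/- Every digraph D on n vertices with minimum semi-degree δ⁰(D) ≥ n/2 contains a directed Hamilton cycle. -/

import Mathlib

/-- Out-degree of a vertex in a digraph given as a relation on `Fin n`. -/
noncomputable def outDeg {n : ℕ} (D : Fin n → Fin n → Prop) (v : Fin n) : ℕ :=
  Nat.card {w : Fin n // D v w}

/-- In-degree of a vertex in a digraph given as a relation on `Fin n`. -/
noncomputable def inDeg {n : ℕ} (D : Fin n → Fin n → Prop) (v : Fin n) : ℕ :=
  Nat.card {w : Fin n // D w v}

namespace GH
variable {n : ℕ} (D : Fin n → Fin n → Prop)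
open Fin.NatCast Fin.CommRing

/-- A directed path of length `m` (with `m+1` vertices) inside the vertex set `S`. -/
def IsPath (S : Set (Fin n)) (m : ℕ) (p : Fin (m+1) → Fin n) : Prop :=
  Function.Injective p ∧ (∀ i, p i ∈ S) ∧
    ∀ (k : ℕ) (h : k < m), D (p ⟨k, Nat.lt_succ_of_lt h⟩) (p ⟨k+1, Nat.succ_lt_succ h⟩)

/-- A directed cycle of length `l`. -/
def IsCycle (l : ℕ) (c : Fin l → Fin n) : Prop :=
  Function.Injective c ∧ ∀ i : Fin l, D (c i) (c (finRotate l i))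

lemma outDeg_eq (v : Fin n) [∀ w, Decidable (D v w)] :
    outDeg D v = (Finset.univ.filter (fun w => D v w)).card := by
  rw [outDeg, Nat.card_eq_fintype_card]
  convert Fintype.card_subtype (fun w => D v w)

lemma inDeg_eq (v : Fin n) [∀ w, Decidable (D w v)] :
    inDeg D v = (Finset.univ.filter (fun w => D w v)).card := by
  rw [inDeg, Nat.card_eq_fintype_card]
  convert Fintype.card_subtype (fun w => D w v)

lemma isCycle_mk (L : ℕ) (hL : 0 < L) (f : Fin L → Fin n)
    (hinj : Function.Injective f)
    (harc : ∀ (k : ℕ) (h : k + 1 < L), D (f ⟨k, Nat.lt_of_succ_lt h⟩) (f ⟨k+1, h⟩))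
    (hlast : D (f ⟨L-1, by omega⟩) (f ⟨0, hL⟩)) : IsCycle D L f := by
  obtain ⟨L', rfl⟩ : ∃ L', L = L' + 1 := ⟨L - 1, by omega⟩
  refine ⟨hinj, fun i => ?_⟩
  rw [finRotate_succ_apply]
  by_cases h : i = Fin.last L'
  · have h1 : i + 1 = ⟨0, hL⟩ := by
      apply Fin.ext
      rw [Fin.val_add_one]
      simp [h]
    have h2 : i = ⟨L' + 1 - 1, by omega⟩ := by apply Fin.ext; simp [h]
    rw [h1, h2]; exact hlast
  · have hlt : i.val < L' := Fin.val_lt_last h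
    have h1 : i + 1 = ⟨i.val + 1, by omega⟩ := by
      apply Fin.ext
      rw [Fin.val_add_one]
      simp [h]
    have h2 : i = ⟨i.val, i.isLt⟩ := by apply Fin.ext; rfl
    rw [h1]
    conv_lhs => rw [h2]
    exact harc i.val (by omega)

lemma cycle_length_le (l : ℕ) (c : Fin l → Fin n) (hc : IsCycle D l c) : l ≤ n := by
  have := Fintype.card_le_of_injective c hc.1
  simpa using this

lemma exists_longest_path (S : Set (Fin n)) (hS : S.Nonempty) :
    ∃ (m : ℕ) (p : Fin (m+1) → Fin n), IsPath D S m p ∧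
      ∀ (m' : ℕ) (p' : Fin (m'+1) → Fin n), IsPath D S m' p' → m' ≤ m := by
  classical
  set P : ℕ → Prop := fun m => ∃ p : Fin (m+1) → Fin n, IsPath D S m p with hP
  have h0 : P 0 := by
    obtain ⟨x, hx⟩ := hS
    exact ⟨fun _ => x, fun a b _ => by apply Fin.ext; omega, fun _ => hx,
      fun k h => absurd h (by omega)⟩
  have hbd : ∀ m, P m → m ≤ n := by
    rintro m ⟨p, hinj, -, -⟩
    have := Fintype.card_le_of_injective p hinj
    simp at this; omega
  obtain ⟨p, hp⟩ := Nat.findGreatest_spec (P := P) (Nat.zero_le n) h0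
  exact ⟨_, p, hp, fun m' p' h' => Nat.le_findGreatest (hbd m' ⟨p', h'⟩) ⟨p', h'⟩⟩

lemma no_extend_back (S : Set (Fin n)) (m : ℕ) (p : Fin (m+1) → Fin n)
    (hp : IsPath D S m p)
    (hmax : ∀ (m' : ℕ) (p' : Fin (m'+1) → Fin n), IsPath D S m' p' → m' ≤ m)
    (w : Fin n) (hw : w ∈ S) (harc : D (p ⟨m, lt_add_one m⟩) w) : w ∈ Set.range p := by
  classical
  by_contra hr
  obtain ⟨hinj, hmem, harcs⟩ := hp
  set q : Fin (m+1+1) → Fin n := fun k =>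
    if h : (k : ℕ) < m+1 then p ⟨k, h⟩ else w with hq
  have hqval : ∀ (k : ℕ) (h : k < m+1) (h2 : k < m+2), q ⟨k, h2⟩ = p ⟨k, h⟩ := by
    intro k h h2; simp [hq, h, Nat.lt_succ_iff.mp h]
  have hqlast : q ⟨m+1, by omega⟩ = w := by simp [hq]
  have : IsPath D S (m+1) q := by
    refine ⟨?_, ?_, ?_⟩
    · intro a b hab
      rcases Nat.lt_or_ge (a : ℕ) (m+1) with ha | ha <;>
        rcases Nat.lt_or_ge (b : ℕ) (m+1) with hb | hb
      · simp only [hq, dif_pos ha, dif_pos hb] at hab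
        have := hinj hab
        apply Fin.ext; simpa [Fin.ext_iff] using this
      · simp only [hq, dif_pos ha, dif_neg (by omega : ¬ (b:ℕ) < m+1)] at hab
        exact absurd ⟨_, hab⟩ hr
      · simp only [hq, dif_pos hb, dif_neg (by omega : ¬ (a:ℕ) < m+1)] at hab
        exact absurd ⟨_, hab.symm⟩ hr
      · apply Fin.ext; omega
    · intro i
      by_cases h : (i : ℕ) < m+1
      · simpa [hq, h, Nat.lt_succ_iff.mp h] using hmem _
      · simp only [hq, dif_neg h]; exact hw
    · intro k hk
      rcases Nat.lt_or_ge k m with h | h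
      · rw [hqval k (by omega) _, hqval (k+1) (by omega) _]
        exact harcs k h
      · have hk' : k = m := by omega
        subst hk'
        rw [hqval k (by omega) _]
        have : q ⟨k+1, by omega⟩ = w := by simp [hq]
        rw [this]
        exact harc
  have := hmax (m+1) q this
  omega

lemma no_extend_front (S : Set (Fin n)) (m : ℕ) (p : Fin (m+1) → Fin n)
    (hp : IsPath D S m p)
    (hmax : ∀ (m' : ℕ) (p' : Fin (m'+1) → Fin n), IsPath D S m' p' → m' ≤ m)
    (w : Fin n) (hw : w ∈ S) (harc : D w (p ⟨0, by omega⟩)) : w ∈ Set.range p := by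
  classical
  by_contra hr
  obtain ⟨hinj, hmem, harcs⟩ := hp
  set q : Fin (m+1+1) → Fin n := fun k =>
    if h : (k : ℕ) = 0 then w else p ⟨(k:ℕ)-1, by omega⟩ with hq
  have hq0 : q ⟨0, by omega⟩ = w := by simp [hq]
  have hqval : ∀ (k : ℕ) (h : k < m+1) (h2 : k+1 < m+2), q ⟨k+1, h2⟩ = p ⟨k, h⟩ := by
    intro k h h2; simp [hq]
  have : IsPath D S (m+1) q := by
    refine ⟨?_, ?_, ?_⟩
    · intro a b hab
      rcases eq_or_ne (a : ℕ) 0 with ha | ha <;>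
        rcases eq_or_ne (b : ℕ) 0 with hb | hb
      · apply Fin.ext; omega
      · simp only [hq, dif_pos ha, dif_neg hb] at hab
        exact absurd ⟨_, hab.symm⟩ hr
      · simp only [hq, dif_pos hb, dif_neg ha] at hab
        exact absurd ⟨_, hab⟩ hr
      · simp only [hq, dif_neg ha, dif_neg hb] at hab
        have := hinj hab
        apply Fin.ext
        have : (a:ℕ) - 1 = (b:ℕ) - 1 := by simpa [Fin.ext_iff] using this
        omega
    · intro i
      by_cases h : (i : ℕ) = 0
      · simpa [hq, h, Fin.val_eq_zero_iff.mp h] using hw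
      · simp only [hq, dif_neg h]; exact hmem _
    · intro k hk
      rcases eq_or_ne k 0 with h | h
      · subst h
        rw [hq0, hqval 0 (by omega) _]
        exact harc
      · obtain ⟨k', rfl⟩ : ∃ k', k = k' + 1 := ⟨k - 1, by omega⟩
        rw [hqval k' (by omega) _, hqval (k'+1) (by omega) _]
        exact harcs k' (by omega)
  have := hmax (m+1) q this
  omega

lemma shift_lemma (l : ℕ) [NeZero l] (m : ℕ) (A B : Finset (Fin l))
    (hA : A.Nonempty) (hB : B.Nonempty)
    (h : ∀ a ∈ A, ∀ j : ℕ, 1 ≤ j → j ≤ m + 1 → a + (j : Fin l) ∉ B) :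
    A.card + B.card + m ≤ l := by
  classical
  induction m generalizing A with
  | zero =>
    have hinj : Function.Injective (fun a : Fin l => a + 1) := fun a b hab => by
      simpa using hab
    have hdisj : Disjoint (A.image (fun a => a + 1)) B := by
      rw [Finset.disjoint_left]
      rintro x hx hxB
      obtain ⟨a, ha, rfl⟩ := Finset.mem_image.mp hx
      exact h a ha 1 le_rfl le_rfl (by simpa using hxB)
    have := Finset.card_union_of_disjoint hdisj
    have hle : (A.image (fun a => a + 1) ∪ B).card ≤ l := by
      have := Finset.card_le_univ (A.image (fun a => a + 1) ∪ B)
      rwa [Fintype.card_fin] at this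
    rw [this, Finset.card_image_of_injective _ hinj] at hle
    simpa using hle
  | succ m ih =>
    by_cases hstep : ∃ a ∈ A, a + 1 ∉ A
    · obtain ⟨a₀, ha₀, ha₀'⟩ := hstep
      set A' : Finset (Fin l) := A ∪ A.image (fun a => a + 1) with hA'
      have hsub : insert (a₀ + 1) A ⊆ A' := by
        intro x hx
        rcases Finset.mem_insert.mp hx with rfl | hx
        · exact Finset.mem_union_right _ (Finset.mem_image_of_mem _ ha₀)
        · exact Finset.mem_union_left _ hx
      have hcard : A.card + 1 ≤ A'.card := by
        have := Finset.card_le_card hsub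
        rwa [Finset.card_insert_of_notMem ha₀'] at this
      have h' : ∀ a ∈ A', ∀ j : ℕ, 1 ≤ j → j ≤ m + 1 → a + (j : Fin l) ∉ B := by
        intro a ha j hj1 hj2
        rcases Finset.mem_union.mp ha with ha | ha
        · exact h a ha j hj1 (by omega)
        · obtain ⟨b, hb, rfl⟩ := Finset.mem_image.mp ha
          have : b + 1 + (j : Fin l) = b + ((j + 1 : ℕ) : Fin l) := by
            push_cast; ring
          rw [this]
          exact h b hb (j+1) (by omega) (by omega)
      have := ih A' ⟨a₀, Finset.mem_union_left _ ha₀⟩ h'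
      omega
    · exfalso
      push_neg at hstep
      have hall : ∀ (k : ℕ), ∀ a ∈ A, a + (k : Fin l) ∈ A := by
        intro k
        induction k with
        | zero => intro a ha; simpa using ha
        | succ k ihk =>
          intro a ha
          have : a + ((k+1 : ℕ) : Fin l) = (a + (k : Fin l)) + 1 := by
            push_cast; ring
          rw [this]
          exact hstep _ (ihk a ha)
      obtain ⟨a₀, ha₀⟩ := hA
      obtain ⟨b₀, hb₀⟩ := hB
      have key : a₀ + (((b₀ - a₀ - 1 : Fin l).val : ℕ) : Fin l) + 1 = b₀ := by
        rw [Fin.cast_val_eq_self]; ring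
      have hmem := hall ((b₀ - a₀ - 1 : Fin l).val) a₀ ha₀
      refine h _ hmem 1 le_rfl (by omega) ?_
      rw [Nat.cast_one, key]
      exact hb₀

lemma exists_initial_cycle (hn : 2 ≤ n) (hloop : ∀ v, ¬ D v v)
    (hdeg : ∀ v, n ≤ 2 * outDeg D v) :
    ∃ (l : ℕ) (c : Fin l → Fin n), IsCycle D l c ∧ n + 2 ≤ 2 * l := by
  classical
  obtain ⟨m, p, hp, hmax⟩ := exists_longest_path D Set.univ ⟨⟨0, by omega⟩, trivial⟩
  obtain ⟨hinj, hmem, harcs⟩ := hp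
  set v : Fin n := p ⟨m, lt_add_one m⟩ with hv
  set F : Finset (Fin n) := Finset.univ.filter (fun w => D v w) with hF
  set I : Finset (Fin (m+1)) := Finset.univ.filter (fun i => D v (p i)) with hI
  have hFI : F ⊆ I.image p := by
    intro w hw
    have hDw : D v w := (Finset.mem_filter.mp hw).2
    have : w ∈ Set.range p :=
      no_extend_back D Set.univ m p ⟨hinj, hmem, harcs⟩ hmax w trivial hDw
    obtain ⟨i, rfl⟩ := this
    exact Finset.mem_image_of_mem p (Finset.mem_filter.mpr ⟨Finset.mem_univ _, hDw⟩)
  have hInonempty : I.Nonempty := by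
    have hFne : F.Nonempty := by
      apply Finset.card_pos.mp
      have h1 := hdeg v
      rw [outDeg_eq, ← hF] at h1
      omega
    obtain ⟨w, hw⟩ := hFne
    obtain ⟨i, hi, -⟩ := Finset.mem_image.mp (hFI hw)
    exact ⟨i, hi⟩
  set i₀ : Fin (m+1) := I.min' hInonempty with hi₀
  have hi₀I : i₀ ∈ I := I.min'_mem hInonempty
  have hi₀min : ∀ i ∈ I, i₀ ≤ i := fun i hi => I.min'_le i hi
  have hIlt : ∀ i ∈ I, (i : ℕ) < m := by
    intro i hi
    have hDv : D v (p i) := (Finset.mem_filter.mp hi).2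
    have : p i ≠ v := fun hh => hloop v (hh ▸ hDv)
    have hne : (i : ℕ) ≠ m := fun hh =>
      this (by rw [show i = ⟨m, lt_add_one m⟩ from Fin.ext hh])
    have hle := Nat.lt_succ_iff.mp i.isLt
    omega
  have hi₀m : (i₀ : ℕ) < m := hIlt i₀ hi₀I
  have hIsub : I.image Fin.val ⊆ Finset.Icc (i₀ : ℕ) (m - 1) := by
    intro x hx
    obtain ⟨i, hi, rfl⟩ := Finset.mem_image.mp hx
    exact Finset.mem_Icc.mpr ⟨hi₀min i hi, by have := hIlt i hi; omega⟩
  have hcardI : I.card ≤ m - (i₀ : ℕ) := by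
    have h1 : I.card = (I.image Fin.val).card :=
      (Finset.card_image_of_injective _ Fin.val_injective).symm
    have h2 := Finset.card_le_card hIsub
    rw [Nat.card_Icc] at h2
    omega
  have hdegbound : outDeg D v ≤ m - (i₀ : ℕ) := by
    rw [outDeg_eq, ← hF]
    calc F.card ≤ (I.image p).card := Finset.card_le_card hFI
    _ ≤ I.card := Finset.card_image_le
    _ ≤ m - (i₀ : ℕ) := hcardI
  set l : ℕ := m - (i₀ : ℕ) + 1 with hl
  set c : Fin l → Fin n := fun k => p ⟨(i₀ : ℕ) + (k : ℕ), by have := k.isLt; omega⟩ with hc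
  refine ⟨l, c, ?_, ?_⟩
  · apply isCycle_mk D l (by omega) c
    · intro a b hab
      have := hinj hab
      apply Fin.ext
      have : (i₀ : ℕ) + (a : ℕ) = (i₀ : ℕ) + (b : ℕ) := by simpa [Fin.ext_iff] using this
      omega
    · intro k hk
      have h1 : (i₀ : ℕ) + k < m := by omega
      have := harcs ((i₀ : ℕ) + k) h1
      convert this using 2 <;> simp [hc, Nat.add_assoc]
    · have h1 : c ⟨l - 1, by omega⟩ = v := by
        simp only [hc, hv]
        congr 1
        apply Fin.ext
        simp only []
        omega
      have h2 : c ⟨0, by omega⟩ = p i₀ := by simp [hc]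
      rw [h1, h2]
      exact (Finset.mem_filter.mp hi₀I).2
  · have := hdeg v
    omega

lemma exists_longer_cycle (l m : ℕ) (c : Fin (l+1) → Fin n)
    (hc : IsCycle D (l+1) c)
    (p : Fin (m+1) → Fin n) (hp : IsPath D {x | x ∉ Set.range c} m p)
    (i : Fin (l+1)) (j : ℕ) (hj1 : 1 ≤ j) (hj2 : j ≤ m + 1) (hjl : j < l + 1)
    (hA : D (c i) (p ⟨0, Nat.succ_pos m⟩))
    (hB : D (p ⟨m, lt_add_one m⟩) (c (i + (j : Fin (l+1))))) :
    ∃ (L : ℕ) (e : Fin L → Fin n), IsCycle D L e ∧ l + 1 < L := by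
  classical
  obtain ⟨hcinj, hcarc⟩ := hc
  obtain ⟨hpinj, hpmem, hparc⟩ := hp
  set t : Fin (l+1) := i + (j : Fin (l+1)) with ht
  set lj : ℕ := l + 1 - j with hlj
  set L : ℕ := lj + m + 2 with hL
  have hcast : ∀ k : ℕ, k < l + 1 → (((k : ℕ) : Fin (l+1))).val = k := by
    intro k hk
    rw [Fin.val_natCast]
    exact Nat.mod_eq_of_lt hk
  set e : Fin L → Fin n := fun k =>
    if h : (k : ℕ) ≤ lj then c (t + ((k : ℕ) : Fin (l+1)))
    else p ⟨(k : ℕ) - (lj + 1), by have := k.isLt; omega⟩ with he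
  have heC : ∀ (k : ℕ) (hk : k < L), k ≤ lj →
      e ⟨k, hk⟩ = c (t + ((k : ℕ) : Fin (l+1))) := by
    intro k hk hkl; simp [he, hkl]
  have heP : ∀ (k : ℕ) (hk : k < L) (h2 : ¬ k ≤ lj),
      e ⟨k, hk⟩ = p ⟨k - (lj + 1), by omega⟩ := by
    intro k hk h2; simp [he, h2]
  refine ⟨L, e, ?_, by omega⟩
  apply isCycle_mk D L (by omega) e
  · intro a b hab
    have ha' := a.isLt
    have hb' := b.isLt
    by_cases ha : (a : ℕ) ≤ lj <;> by_cases hb : (b : ℕ) ≤ lj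
    · rw [show a = ⟨(a:ℕ), ha'⟩ from rfl, show b = ⟨(b:ℕ), hb'⟩ from rfl,
        heC _ _ ha, heC _ _ hb] at hab
      have h1 := hcinj hab
      have h2 : (((a:ℕ) : Fin (l+1))) = (((b:ℕ)) : Fin (l+1)) := by
        exact add_left_cancel h1
      have h3 := congrArg Fin.val h2
      rw [hcast _ (by omega), hcast _ (by omega)] at h3
      exact Fin.ext h3
    · rw [show a = ⟨(a:ℕ), ha'⟩ from rfl, show b = ⟨(b:ℕ), hb'⟩ from rfl,
        heC _ _ ha, heP _ _ hb] at hab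
      exact absurd ⟨_, hab⟩ (hpmem ⟨(b:ℕ) - (lj+1), by omega⟩)
    · rw [show a = ⟨(a:ℕ), ha'⟩ from rfl, show b = ⟨(b:ℕ), hb'⟩ from rfl,
        heP _ _ ha, heC _ _ hb] at hab
      exact absurd ⟨_, hab.symm⟩ (hpmem ⟨(a:ℕ) - (lj+1), by omega⟩)
    · rw [show a = ⟨(a:ℕ), ha'⟩ from rfl, show b = ⟨(b:ℕ), hb'⟩ from rfl,
        heP _ _ ha, heP _ _ hb] at hab
      have := hpinj hab
      have : (a:ℕ) - (lj+1) = (b:ℕ) - (lj+1) := by simpa [Fin.ext_iff] using this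
      exact Fin.ext (by omega)
  · intro k hk
    by_cases hk1 : k + 1 ≤ lj
    · rw [heC _ _ (by omega), heC _ _ hk1]
      have harc := hcarc (t + ((k : ℕ) : Fin (l+1)))
      rw [finRotate_succ_apply] at harc
      have : t + (((k+1 : ℕ)) : Fin (l+1)) = t + ((k : ℕ) : Fin (l+1)) + 1 := by
        push_cast; ring
      rw [this]
      exact harc
    · by_cases hk2 : k ≤ lj
      · have hkeq : k = lj := by omega
        rw [heC _ _ hk2, heP _ _ (by omega)]
        have h1 : t + ((k : ℕ) : Fin (l+1)) = i := by
          rw [ht, hkeq]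
          have : ((j : ℕ) : Fin (l+1)) + ((lj : ℕ) : Fin (l+1)) =
              ((j + lj : ℕ) : Fin (l+1)) := by
            push_cast; ring
          rw [add_assoc, this, show j + lj = l + 1 by omega, Fin.natCast_self]
          exact add_zero i
        have h2 : (⟨k + 1 - (lj + 1), by omega⟩ : Fin (m+1)) = ⟨0, Nat.succ_pos m⟩ := by
          apply Fin.ext; simp; omega
        rw [h1, h2]
        exact hA
      · rw [heP _ _ (by omega), heP _ _ (by omega)]
        have h4 : (⟨k + 1 - (lj + 1), by omega⟩ : Fin (m+1)) =
            ⟨(k - (lj + 1)) + 1, by omega⟩ := by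
          apply Fin.ext; simp; omega
        rw [h4]
        exact hparc (k - (lj + 1)) (by omega)
  · rw [heP _ _ (by omega), heC _ _ (by omega)]
    have h1 : (⟨L - 1 - (lj + 1), by omega⟩ : Fin (m+1)) = ⟨m, lt_add_one m⟩ := by
      apply Fin.ext; simp [hL]
    have h2 : t + ((0 : ℕ) : Fin (l+1)) = t := by
      rw [Nat.cast_zero, add_zero]
    rw [h1, h2]
    exact hB

end GH

open Fin.NatCast

set_option maxHeartbeats 1000000 in
/-- **Ghouila-Houri's theorem.** Every loopless digraph on `n` vertices with minimum
out-degree and minimum in-degree at least `n/2` contains a directed Hamilton cycle,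
i.e. a cyclic ordering `σ` of the vertices such that each vertex sends an edge to the
next one. -/
theorem ghouila_houri (n : ℕ) (D : Fin n → Fin n → Prop)
    (hloop : ∀ v, ¬ D v v)
    (hdeg : ∀ v, (n : ℝ) / 2 ≤ outDeg D v ∧ (n : ℝ) / 2 ≤ inDeg D v) :
    ∃ σ : Fin n ≃ Fin n, ∀ k : Fin n, D (σ k) (σ (finRotate n k)) := by
  classical
  -- trivial case n = 0
  rcases Nat.eq_zero_or_pos n with rfl | hn0
  · exact ⟨Equiv.refl _, fun k => k.elim0⟩
  -- degenerate case n = 1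
  rcases eq_or_ne n 1 with rfl | hn1
  · exfalso
    have h := (hdeg 0).1
    have : outDeg D 0 = 0 := by
      rw [GH.outDeg_eq]
      apply Finset.card_eq_zero.mpr
      apply Finset.filter_eq_empty_iff.mpr
      intro w _
      have : w = 0 := Subsingleton.elim w 0
      rw [this]
      exact hloop 0
    rw [this] at h
    norm_num at h
  have hn : 2 ≤ n := by omega
  -- natural-number degree conditions
  have hdegN : ∀ v, n ≤ 2 * outDeg D v ∧ n ≤ 2 * inDeg D v := by
    intro v
    obtain ⟨h1, h2⟩ := hdeg v
    constructor
    · have : (n : ℝ) ≤ 2 * (outDeg D v : ℝ) := by linarith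
      exact_mod_cast this
    · have : (n : ℝ) ≤ 2 * (inDeg D v : ℝ) := by linarith
      exact_mod_cast this
  -- initial cycle
  obtain ⟨l₀, c₀, hc₀, hl₀⟩ := GH.exists_initial_cycle D hn hloop (fun v => (hdegN v).1)
  -- longest cycle
  set P : ℕ → Prop := fun l => ∃ c : Fin l → Fin n, GH.IsCycle D l c with hP
  have hbd : ∀ l, P l → l ≤ n := by
    rintro l ⟨c, hc⟩
    exact GH.cycle_length_le D l c hc
  set l : ℕ := Nat.findGreatest P n with hldef
  have hPl : P l := Nat.findGreatest_spec (P := P) (hbd l₀ ⟨c₀, hc₀⟩) ⟨c₀, hc₀⟩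
  have hlmax : ∀ l', P l' → l' ≤ l := fun l' h' => Nat.le_findGreatest (hbd l' h') h'
  have hl₀l : l₀ ≤ l := hlmax l₀ ⟨c₀, hc₀⟩
  have hln : l ≤ n := hbd l hPl
  obtain ⟨c, hc⟩ := hPl
  clear_value l
  clear hldef
  have hl2 : n + 2 ≤ 2 * l := by omega
  -- if l = n we are done
  rcases eq_or_lt_of_le hln with rfl | hlltn
  · obtain ⟨hcinj, hcarc⟩ := hc
    have hbij : Function.Bijective c := Finite.injective_iff_bijective.mp hcinj
    exact ⟨Equiv.ofBijective c hbij, hcarc⟩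
  -- otherwise derive a contradiction
  exfalso
  obtain ⟨l', rfl⟩ : ∃ l', l = l' + 1 := ⟨l - 1, by omega⟩
  set S : Set (Fin n) := {x | x ∉ Set.range c} with hS
  -- S is nonempty
  have hcardim : (Finset.univ.image c).card = l' + 1 := by
    rw [Finset.card_image_of_injective _ hc.1, Finset.card_univ, Fintype.card_fin]
  have hSne : S.Nonempty := by
    by_contra hSe
    push_neg at hSe
    rw [Set.eq_empty_iff_forall_notMem] at hSe
    have : (Finset.univ : Finset (Fin n)) ⊆ Finset.univ.image c := by
      intro x _
      have : x ∈ Set.range c := by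
        by_contra hx
        exact hSe x hx
      obtain ⟨i, rfl⟩ := this
      exact Finset.mem_image_of_mem c (Finset.mem_univ i)
    have := Finset.card_le_card this
    rw [hcardim] at this
    simp at this
    omega
  -- longest path in S
  obtain ⟨m, p, hp, hmax⟩ := GH.exists_longest_path D S hSne
  have hpinj := hp.1
  have hpmem := hp.2.1
  -- m + 1 + (l'+1) ≤ n
  have hml : m + 1 + (l' + 1) ≤ n := by
    have hdisj : Disjoint (Finset.univ.image p) (Finset.univ.image c) := by
      rw [Finset.disjoint_left]
      rintro x hx hxc
      obtain ⟨i, -, rfl⟩ := Finset.mem_image.mp hx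
      obtain ⟨i', -, hi'⟩ := Finset.mem_image.mp hxc
      exact (hpmem i) ⟨i', hi'⟩
    have h1 := Finset.card_union_of_disjoint hdisj
    have h2 := Finset.card_le_univ ((Finset.univ.image p) ∪ (Finset.univ.image c))
    rw [h1, hcardim, Finset.card_image_of_injective _ hpinj, Finset.card_univ,
      Fintype.card_fin, Fintype.card_fin] at h2
    omega
  -- the sets A and B on the cycle
  set p0 : Fin n := p ⟨0, Nat.succ_pos m⟩ with hp0
  set pm : Fin n := p ⟨m, lt_add_one m⟩ with hpm
  set A : Finset (Fin (l'+1)) := Finset.univ.filter (fun i => D (c i) p0) with hA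
  set B : Finset (Fin (l'+1)) := Finset.univ.filter (fun i => D pm (c i)) with hB
  -- counting: in-neighbours of p0
  have hAcard : n ≤ 2 * (A.card + m) := by
    have h1 : (Finset.univ.filter (fun w => D w p0)) ⊆
        A.image c ∪ (Finset.univ.image p).erase p0 := by
      intro w hw
      have hDw : D w p0 := (Finset.mem_filter.mp hw).2
      by_cases hwc : w ∈ Set.range c
      · obtain ⟨i, rfl⟩ := hwc
        exact Finset.mem_union_left _
          (Finset.mem_image_of_mem c (Finset.mem_filter.mpr ⟨Finset.mem_univ _, hDw⟩))
      · have hwS : w ∈ S := hwc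
        have hwp : w ∈ Set.range p := GH.no_extend_front D S m p hp hmax w hwS hDw
        obtain ⟨i, rfl⟩ := hwp
        refine Finset.mem_union_right _ (Finset.mem_erase.mpr ⟨?_, ?_⟩)
        · intro hh
          rw [hh] at hDw
          exact hloop _ hDw
        · exact Finset.mem_image_of_mem p (Finset.mem_univ i)
    have h2 := Finset.card_le_card h1
    have h3 : ((Finset.univ.image p).erase p0).card = m := by
      rw [Finset.card_erase_of_mem
        (Finset.mem_image_of_mem p (Finset.mem_univ _)),
        Finset.card_image_of_injective _ hpinj, Finset.card_univ, Fintype.card_fin]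
      omega
    have h4 := Finset.card_union_le (A.image c) ((Finset.univ.image p).erase p0)
    have h5 : (A.image c).card ≤ A.card := Finset.card_image_le
    have h6 := (hdegN p0).2
    rw [GH.inDeg_eq] at h6
    omega
  -- counting: out-neighbours of pm
  have hBcard : n ≤ 2 * (B.card + m) := by
    have h1 : (Finset.univ.filter (fun w => D pm w)) ⊆
        B.image c ∪ (Finset.univ.image p).erase pm := by
      intro w hw
      have hDw : D pm w := (Finset.mem_filter.mp hw).2
      by_cases hwc : w ∈ Set.range c
      · obtain ⟨i, rfl⟩ := hwc
        exact Finset.mem_union_left _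
          (Finset.mem_image_of_mem c (Finset.mem_filter.mpr ⟨Finset.mem_univ _, hDw⟩))
      · have hwS : w ∈ S := hwc
        have hwp : w ∈ Set.range p := GH.no_extend_back D S m p hp hmax w hwS hDw
        obtain ⟨i, rfl⟩ := hwp
        refine Finset.mem_union_right _ (Finset.mem_erase.mpr ⟨?_, ?_⟩)
        · intro hh
          rw [hh] at hDw
          exact hloop _ hDw
        · exact Finset.mem_image_of_mem p (Finset.mem_univ i)
    have h2 := Finset.card_le_card h1
    have h3 : ((Finset.univ.image p).erase pm).card = m := by
      rw [Finset.card_erase_of_mem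
        (Finset.mem_image_of_mem p (Finset.mem_univ _)),
        Finset.card_image_of_injective _ hpinj, Finset.card_univ, Fintype.card_fin]
      omega
    have h4 := Finset.card_union_le (B.image c) ((Finset.univ.image p).erase pm)
    have h5 : (B.image c).card ≤ B.card := Finset.card_image_le
    have h6 := (hdegN pm).1
    rw [GH.outDeg_eq] at h6
    omega
  -- A and B are nonempty
  have hAc0 : 0 < A.card := by omega
  have hBc0 : 0 < B.card := by omega
  have hAne : A.Nonempty := Finset.card_pos.mp hAc0
  have hBne : B.Nonempty := Finset.card_pos.mp hBc0
  -- no forbidden configuration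
  have hforb : ∀ a ∈ A, ∀ j : ℕ, 1 ≤ j → j ≤ m + 1 → a + (j : Fin (l'+1)) ∉ B := by
    intro a ha j hj1 hj2 hjB
    have hjl : j < l' + 1 := by omega
    have hDA : D (c a) p0 := (Finset.mem_filter.mp ha).2
    have hDB : D pm (c (a + (j : Fin (l'+1)))) := (Finset.mem_filter.mp hjB).2
    obtain ⟨L, e, he, hLgt⟩ :=
      GH.exists_longer_cycle D l' m c hc p hp a j hj1 hj2 hjl hDA hDB
    have := hlmax L ⟨e, he⟩
    omega
  have hmain := GH.shift_lemma (l'+1) m A B hAne hBne hforb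
  omega
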